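/- Every family U of intervals over {1,…,n} can be obtained from its canonical form U* by a finite sequence of right-endpoint swap operations; that is, the pair (U*, U) belongs to the reflexive-transitive closure of the one-step right-endpoint swap relation on families of intervals. -/

import Mathlib

/-- The canonical form `U*` of a family `U` of intervals: pair the `j`-th smallest left
endpoint with the `j`-th smallest right endpoint, for `j = 1,…,|U|`. -/
def canonical (U : Multiset (ℕ × ℕ)) : Multiset (ℕ × ℕ) :=
  ((Multiset.sort (U.map Prod.fst) (· ≤ ·)).zip
    (Multiset.sort (U.map Prod.snd) (· ≤ ·)) : List (ℕ × ℕ))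

/-- A right-endpoint swap operation: `T` contains intervals `I₁ = [l_a, r_a]` and
`I₂ = [l_b, r_b]` with `l_a ≤ l_b ≤ r_a ≤ r_b`, and `T'` is obtained from `T` by
removing one copy of each and adding `I_∪ = [l_a, r_b]` and `I_∩ = [l_b, r_a]`. -/
def SwapStep (T T' : Multiset (ℕ × ℕ)) : Prop :=
  ∃ la lb ra rb : ℕ, la ≤ lb ∧ lb ≤ ra ∧ ra ≤ rb ∧
    ∃ T₀ : Multiset (ℕ × ℕ),
      T = (la, ra) ::ₘ (lb, rb) ::ₘ T₀ ∧ T' = (la, rb) ::ₘ (lb, ra) ::ₘ T₀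

namespace Stmt8Aux

def lexr (p q : ℕ × ℕ) : Prop := p.1 < q.1 ∨ (p.1 = q.1 ∧ p.2 ≤ q.2)

instance : DecidableRel lexr := fun p q => by unfold lexr; infer_instance

instance : IsTrans (ℕ × ℕ) lexr :=
  ⟨by rintro ⟨a, b⟩ ⟨c, d⟩ ⟨e, f⟩ h1 h2; simp only [lexr] at *; omega⟩

instance : IsAntisymm (ℕ × ℕ) lexr :=
  ⟨by rintro ⟨a, b⟩ ⟨c, d⟩ h1 h2; simp only [lexr, Prod.mk.injEq] at *; omega⟩

instance : IsTotal (ℕ × ℕ) lexr :=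
  ⟨by rintro ⟨a, b⟩ ⟨c, d⟩; simp only [lexr]; omega⟩

lemma zip_fst_snd : ∀ (l : List (ℕ × ℕ)), (l.map Prod.fst).zip (l.map Prod.snd) = l
  | [] => rfl
  | p :: l => by simp [zip_fst_snd l]

lemma sum_map_le (s : Multiset (ℕ × ℕ)) (f g : ℕ × ℕ → ℕ) (h : ∀ p ∈ s, f p ≤ g p) :
    (s.map f).sum ≤ (s.map g).sum := by
  induction s using Multiset.induction with
  | empty => simp
  | cons a s ih =>
    simp only [Multiset.map_cons, Multiset.sum_cons]
    exact Nat.add_le_add (h a (Multiset.mem_cons_self a s))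
      (ih fun p hp => h p (Multiset.mem_cons_of_mem hp))

/-- If `T` has no strictly nested pair, then `T` equals its canonical form. -/
lemma fixed (T : Multiset (ℕ × ℕ))
    (hno : ∀ p ∈ T, ∀ q ∈ T, ¬(p.1 < q.1 ∧ q.2 < p.2)) : canonical T = T := by
  set L := Multiset.sort T lexr with hL
  have hLT : (L : Multiset (ℕ × ℕ)) = T := Multiset.sort_eq T lexr
  have hsorted : L.Pairwise lexr := Multiset.pairwise_sort T lexr
  have hmemL : ∀ p ∈ L, p ∈ T := by intro p hp; rw [← hLT]; exact_mod_cast hp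
  have hfst : (L.map Prod.fst).Pairwise (· ≤ ·) :=
    List.Pairwise.map _ (fun a b hab => le_of_lt_or_eq (by rcases hab with h | ⟨h, _⟩ <;> tauto))
      hsorted
  have hsnd : (L.map Prod.snd).Pairwise (· ≤ ·) := by
    refine List.Pairwise.map _ (fun a b hab => hab) ?_
    refine List.Pairwise.imp_of_mem ?_ hsorted
    intro a b ha hb hab
    rcases hab with h | ⟨_, h⟩
    · by_contra hc
      exact hno a (hmemL a ha) b (hmemL b hb) ⟨h, Nat.lt_of_not_le hc⟩
    · exact h
  have e1 : Multiset.sort (T.map Prod.fst) (· ≤ ·) = L.map Prod.fst := by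
    apply List.Perm.eq_of_pairwise' (Multiset.pairwise_sort _ _) hfst
    rw [← Multiset.coe_eq_coe, Multiset.sort_eq, ← hLT, Multiset.map_coe]
  have e2 : Multiset.sort (T.map Prod.snd) (· ≤ ·) = L.map Prod.snd := by
    apply List.Perm.eq_of_pairwise' (Multiset.pairwise_sort _ _) hsnd
    rw [← Multiset.coe_eq_coe, Multiset.sort_eq, ← hLT, Multiset.map_coe]
  rw [canonical, e1, e2, zip_fst_snd, hLT]

lemma main : ∀ (k : ℕ) (T : Multiset (ℕ × ℕ)), (∀ p ∈ T, p.1 ≤ p.2) →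
    (T.map fun p => p.2 * p.2).sum ≤ (T.map fun p => p.1 * p.2).sum + k →
    Relation.ReflTransGen SwapStep (canonical T) T := by
  intro k
  induction k with
  | zero =>
    intro T hT hsum
    by_cases h : ∃ p ∈ T, ∃ q ∈ T, p.1 < q.1 ∧ q.2 < p.2
    · exfalso
      obtain ⟨p, hp, q, hq, h1, h2⟩ := h
      have hpq : p ≠ q := fun e => by rw [e] at h1; omega
      have hq' : q ∈ T.erase p := (Multiset.mem_erase_of_ne hpq.symm).mpr hq
      set T₀ := (T.erase p).erase q with hT₀
      have hTe : T = p ::ₘ q ::ₘ T₀ := by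
        rw [hT₀, Multiset.cons_erase hq', Multiset.cons_erase hp]
      have hsub : ∀ x ∈ T₀, x ∈ T := by
        intro x hx
        exact Multiset.mem_of_mem_erase (Multiset.mem_of_mem_erase hx)
      have hle : (T₀.map fun p => p.2 * p.2).sum ≥ (T₀.map fun p => p.1 * p.2).sum :=
        sum_map_le T₀ _ _ fun x hx => Nat.mul_le_mul_right _ (hT x (hsub x hx))
      have hq12 : q.1 ≤ q.2 := hT q hq
      rw [hTe] at hsum
      simp only [Multiset.map_cons, Multiset.sum_cons, Nat.add_zero] at hsum
      have hpstrict : p.1 * p.2 < p.2 * p.2 := by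
        apply Nat.mul_lt_mul_of_lt_of_le <;> omega
      have hqle : q.1 * q.2 ≤ q.2 * q.2 := Nat.mul_le_mul_right _ hq12
      omega
    · push_neg at h
      rw [fixed T (by intro p hp q hq hc; exact absurd hc.2 (Nat.not_lt.mpr (h p hp q hq hc.1)))]
  | succ k ih =>
    intro T hT hsum
    by_cases h : ∃ p ∈ T, ∃ q ∈ T, p.1 < q.1 ∧ q.2 < p.2
    · obtain ⟨p, hp, q, hq, h1, h2⟩ := h
      have hpq : p ≠ q := fun e => by rw [e] at h1; omega
      have hq' : q ∈ T.erase p := (Multiset.mem_erase_of_ne hpq.symm).mpr hq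
      set T₀ := (T.erase p).erase q with hT₀
      have hTe : T = p ::ₘ q ::ₘ T₀ := by
        rw [hT₀, Multiset.cons_erase hq', Multiset.cons_erase hp]
      have hsub : ∀ x ∈ T₀, x ∈ T := by
        intro x hx
        exact Multiset.mem_of_mem_erase (Multiset.mem_of_mem_erase hx)
      have hq12 : q.1 ≤ q.2 := hT q hq
      set T' : Multiset (ℕ × ℕ) := (p.1, q.2) ::ₘ (q.1, p.2) ::ₘ T₀ with hT'
      have hswap : SwapStep T' T := by
        refine ⟨p.1, q.1, q.2, p.2, le_of_lt h1, hq12, le_of_lt h2, T₀, rfl, ?_⟩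
        rw [hTe]
      have hcanon : canonical T' = canonical T := by
        have hf : T'.map Prod.fst = T.map Prod.fst := by
          rw [hTe, hT']; simp [Multiset.map_cons]
        have hs : T'.map Prod.snd = T.map Prod.snd := by
          rw [hTe, hT']; simp only [Multiset.map_cons]
          exact Multiset.cons_swap _ _ _
        rw [canonical, canonical, hf, hs]
      have hT'mem : ∀ x ∈ T', x.1 ≤ x.2 := by
        intro x hx
        rw [hT', Multiset.mem_cons, Multiset.mem_cons] at hx
        rcases hx with rfl | rfl | hx
        · exact le_of_lt (lt_of_lt_of_le h1 hq12)
        · exact le_of_lt (lt_of_le_of_lt hq12 h2)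
        · exact hT x (hsub x hx)
      have hsum' : (T'.map fun p => p.2 * p.2).sum ≤ (T'.map fun p => p.1 * p.2).sum + k := by
        rw [hTe] at hsum
        rw [hT']
        simp only [Multiset.map_cons, Multiset.sum_cons] at hsum ⊢
        have hineq : p.1 * p.2 + q.1 * q.2 + 1 ≤ p.1 * q.2 + q.1 * p.2 := by
          nlinarith
        omega
      rw [← hcanon] at *; exact (ih T' hT'mem hsum').tail hswap
    · push_neg at h
      rw [fixed T (by intro p hp q hq hc; exact absurd hc.2 (Nat.not_lt.mpr (h p hp q hq hc.1)))]

end Stmt8Aux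

/-- Every family `U` of intervals over `{1,…,n}` can be obtained from its
canonical form `U*` by a finite sequence of right-endpoint swap operations, i.e.
`(U*, U)` lies in the reflexive-transitive closure of the one-step swap relation. -/
theorem stmt_8 (n : ℕ) (U : Multiset (ℕ × ℕ))
    (hU : ∀ p ∈ U, 1 ≤ p.1 ∧ p.1 ≤ p.2 ∧ p.2 ≤ n) :
    Relation.ReflTransGen SwapStep (canonical U) U := by
  exact Stmt8Aux.main ((U.map fun p => p.2 * p.2).sum) U (fun p hp => (hU p hp).2.1)
    (Nat.le_add_left _ _)
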